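/- A countable family K = (A_i)_{i∈I} of pairwise nonisomorphic structures is PL-learnable if and only if for all i ≠ j in I the two-element subfamily {A_i, A_j} is Ex-learnable. (This is the paper's characterization of PL-learnability by Σ^inf_2-antichains, using that a pair of structures forms a Σ^inf_2-antichain exactly when it is Ex-learnable.) -/

import Mathlib

/-- A structure on domain ℕ: a binary relation given as a map to `Bool`. -/
abbrev Struc := ℕ → ℕ → Bool

/-- The restrictions of `R` and `R'` to `{0,…,s} × {0,…,s}` agree. -/
def restrEq (R R' : Struc) (s : ℕ) : Prop :=
  ∀ x ≤ s, ∀ y ≤ s, R x y = R' x y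

/-- `R` and `R'` are isomorphic structures. -/
def Isom (R R' : Struc) : Prop :=
  ∃ e : ℕ ≃ ℕ, ∀ x y, R' (e x) (e y) = R x y

/-- `R↾s` embeds into `R'`: there is a map injective on `{0,…,s}` preserving the relation. -/
def EmbedsRestr (R : Struc) (s : ℕ) (R' : Struc) : Prop :=
  ∃ h : ℕ → ℕ, (∀ x ≤ s, ∀ y ≤ s, h x = h y → x = y) ∧
    (∀ x ≤ s, ∀ y ≤ s, R' (h x) (h y) = R x y)

/-- The learning domain of a family: all isomorphic copies of members of the family. -/
def LD {I : Type} (A : I → Struc) : Set Struc := {R | ∃ i, Isom R (A i)}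

/-- A learner: its conjecture at stage `s` depends only on `R↾s`. -/
def IsLearner {I : Type} (M : Struc → ℕ → Option I) : Prop :=
  ∀ R R' s, restrEq R R' s → M R s = M R' s

/-- `M` Ex-learns the family `A`. -/
def ExLearns {I : Type} (A : I → Struc) (M : Struc → ℕ → Option I) : Prop :=
  ∀ R i, Isom R (A i) → ∃ s₀, ∀ s ≥ s₀, M R s = some i

/-- `M` Fin-learns the family `A`. -/
def FinLearns {I : Type} (A : I → Struc) (M : Struc → ℕ → Option I) : Prop :=
  ∀ R i, Isom R (A i) →
    ∃ s₀, (∀ s < s₀, M R s = none) ∧ (∀ s ≥ s₀, M R s = some i)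

/-- `M` co-learns the family `A`. -/
def CoLearns {I : Type} (A : I → Struc) (M : Struc → ℕ → Option I) : Prop :=
  ∀ R i, Isom R (A i) → ∀ j, (∃ s, M R s = some j) ↔ j ≠ i

/-- `M` nUs-learns the family `A`: it Ex-learns it and never abandons the correct conjecture. -/
def NUsLearns {I : Type} (A : I → Struc) (M : Struc → ℕ → Option I) : Prop :=
  ExLearns A M ∧
    ∀ R i, Isom R (A i) → ∀ s, M R s = some i → ∀ t ≥ s, M R t = some i

/-- `M` Dec-learns the family `A`: it Ex-learns it and never repeats an abandoned conjecture. -/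
def DecLearns {I : Type} (A : I → Struc) (M : Struc → ℕ → Option I) : Prop :=
  ExLearns A M ∧
    ∀ R ∈ LD A, ∀ (j : I) (s : ℕ), M R s = some j → M R (s + 1) ≠ some j →
      ∀ t > s, M R t ≠ some j

/-- `M` PL-learns the family `A`: the unique conjecture output infinitely often is correct. -/
def PLLearns {I : Type} (A : I → Struc) (M : Struc → ℕ → Option I) : Prop :=
  ∀ R ∈ LD A, ∀ i, {s | M R s = some i}.Infinite ↔ Isom R (A i)

/-- The relation `E₀` on Baire space: eventual agreement. -/
def E0 (p q : ℕ → ℕ) : Prop := ∃ m, ∀ n ≥ m, p n = q n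

/-- The relation `E₃` on `ℕ → (ℕ → ℕ)`: columnwise `E₀`. -/
def E3 (p q : ℕ → ℕ → ℕ) : Prop := ∀ m, E0 (p m) (q m)

/-- The relation `E_range` on Baire space: equality of ranges. -/
def Erange (p q : ℕ → ℕ) : Prop := Set.range p = Set.range q


section PLAux

private lemma isomSymm {R R' : Struc} (h : Isom R R') : Isom R' R := by
  obtain ⟨e, he⟩ := h
  refine ⟨e.symm, fun x y => ?_⟩
  have := (he (e.symm x) (e.symm y)).symm
  simpa using this

private lemma isomTrans {R R' R'' : Struc} (h : Isom R R') (h' : Isom R' R'') :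
    Isom R R'' := by
  obtain ⟨e, he⟩ := h; obtain ⟨e', he'⟩ := h'
  refine ⟨e.trans e', fun x y => ?_⟩
  simp only [Equiv.trans_apply]
  rw [he', he]

private lemma restrEq_mono {R R' : Struc} {s t : ℕ} (h : restrEq R R' s) (hts : t ≤ s) :
    restrEq R R' t := fun x hx y hy => h x (hx.trans hts) y (hy.trans hts)

/-! ### The pair learner built from a PL-learner (forward direction) -/

open Classical in
/-- Given a learner `M`, decide between `i` and `j` by the most recent occurrence. -/
noncomputable def pairLearner {I : Type} (M : Struc → ℕ → Option I) (i j : I)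
    (R : Struc) (s : ℕ) : Option (Fin 2) :=
  if h : ((Finset.range (s+1)).filter (fun t => M R t = some i ∨ M R t = some j)).Nonempty then
    (if M R (((Finset.range (s+1)).filter
        (fun t => M R t = some i ∨ M R t = some j)).max' h) = some i
     then some 0 else some 1)
  else some 0

private lemma pairLearner_isLearner {I : Type} {M : Struc → ℕ → Option I} (hM : IsLearner M)
    (i j : I) : IsLearner (pairLearner M i j) := by
  classical
  intro R R' s hre
  have hMt : ∀ t ≤ s, M R t = M R' t := fun t ht => hM R R' t (restrEq_mono hre ht)
  have hFF : ((Finset.range (s+1)).filter (fun t => M R t = some i ∨ M R t = some j)) =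
      ((Finset.range (s+1)).filter (fun t => M R' t = some i ∨ M R' t = some j)) := by
    refine Finset.filter_congr fun t ht => ?_
    rw [hMt t (Nat.lt_succ_iff.mp (Finset.mem_range.mp ht))]
  unfold pairLearner
  rw [hFF]
  by_cases hne : ((Finset.range (s+1)).filter
      (fun t => M R' t = some i ∨ M R' t = some j)).Nonempty
  · rw [dif_pos hne, dif_pos hne]
    have hmx := Finset.max'_mem _ hne
    have hmxle : ((Finset.range (s+1)).filter
        (fun t => M R' t = some i ∨ M R' t = some j)).max' hne ≤ s :=
      Nat.lt_succ_iff.mp (Finset.mem_range.mp (Finset.filter_subset _ _ hmx))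
    rw [hMt _ hmxle]
  · rw [dif_neg hne, dif_neg hne]

private lemma pairLearner_conv₀ {I : Type} {M : Struc → ℕ → Option I} {i j : I} {R : Struc}
    (hinf : {s | M R s = some i}.Infinite) (hfin : {s | M R s = some j}.Finite) :
    ∃ s₀, ∀ s ≥ s₀, pairLearner M i j R s = some 0 := by
  classical
  obtain ⟨T, hT⟩ := hfin.bddAbove
  obtain ⟨t₀, ht₀, hTt₀⟩ := hinf.exists_gt T
  refine ⟨t₀, fun s hs => ?_⟩
  have hmem : t₀ ∈ (Finset.range (s+1)).filter
      (fun t => M R t = some i ∨ M R t = some j) := by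
    exact Finset.mem_filter.mpr ⟨Finset.mem_range.mpr (Nat.lt_succ_of_le hs), Or.inl ht₀⟩
  have hne : ((Finset.range (s+1)).filter
      (fun t => M R t = some i ∨ M R t = some j)).Nonempty := ⟨t₀, hmem⟩
  unfold pairLearner
  rw [dif_pos hne]
  have hmx := Finset.max'_mem _ hne
  have hge : t₀ ≤ ((Finset.range (s+1)).filter
      (fun t => M R t = some i ∨ M R t = some j)).max' hne := Finset.le_max' _ _ hmem
  rcases (Finset.mem_filter.mp hmx).2 with h' | h'
  · rw [if_pos h']
  · exact absurd (hT h') (by omega)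

private lemma pairLearner_conv₁ {I : Type} {M : Struc → ℕ → Option I} {i j : I} {R : Struc}
    (hij : i ≠ j)
    (hinf : {s | M R s = some j}.Infinite) (hfin : {s | M R s = some i}.Finite) :
    ∃ s₀, ∀ s ≥ s₀, pairLearner M i j R s = some 1 := by
  classical
  obtain ⟨T, hT⟩ := hfin.bddAbove
  obtain ⟨t₀, ht₀, hTt₀⟩ := hinf.exists_gt T
  refine ⟨t₀, fun s hs => ?_⟩
  have hmem : t₀ ∈ (Finset.range (s+1)).filter
      (fun t => M R t = some i ∨ M R t = some j) := by
    exact Finset.mem_filter.mpr ⟨Finset.mem_range.mpr (Nat.lt_succ_of_le hs), Or.inr ht₀⟩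
  have hne : ((Finset.range (s+1)).filter
      (fun t => M R t = some i ∨ M R t = some j)).Nonempty := ⟨t₀, hmem⟩
  unfold pairLearner
  rw [dif_pos hne]
  have hmx := Finset.max'_mem _ hne
  have hge : t₀ ≤ ((Finset.range (s+1)).filter
      (fun t => M R t = some i ∨ M R t = some j)).max' hne := Finset.le_max' _ _ hmem
  rcases (Finset.mem_filter.mp hmx).2 with h' | h'
  · exact absurd (hT h') (by omega)
  · rw [if_neg (by rw [h']; exact fun hc => hij (Option.some.inj hc).symm)]

/-! ### The PL-learner built from pair Ex-learners (backward direction) -/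

/-- The set of "qualifying" positions at tournament size `n` w.r.t. dominance `Ws`. -/
def plQ {I : Type} (f : ℕ → I) (Ws : I → I → Prop) (n : ℕ) : Set ℕ :=
  {m | m ≤ n ∧ ∀ m' ≤ n, f m' ≠ f m → Ws (f m) (f m')}

open Classical in
/-- One step of the PL-learner: output the least qualifier unless it is vetoed. -/
noncomputable def pstep {I : Type} (f : ℕ → I) (Ws : I → I → Prop) (n : ℕ) (c : I → ℕ) :
    Option I :=
  if (plQ f Ws n).Nonempty then
    if ∃ m' ≤ c (f (sInf (plQ f Ws n))),
        f m' ≠ f (sInf (plQ f Ws n)) ∧ Ws (f m') (f (sInf (plQ f Ws n)))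
    then none
    else some (f (sInf (plQ f Ws n)))
  else none

open Classical in
/-- The PL-learner: at stage `s`, run a tournament of size `(unpair s).1` with vetoes
counted against the number of previous outputs. -/
noncomputable def pout {I : Type} (f : ℕ → I) (W : ℕ → I → I → Prop) (s : ℕ) : Option I :=
  pstep f (W s) (Nat.unpair s).1
    (fun j => ((Finset.range s).filter
      (fun t => (if h : t < s then pout f W t else none) = some j)).card)
termination_by s

open Classical in
/-- Number of stages `< s` at which `j` was output. -/
noncomputable def pcount {I : Type} (f : ℕ → I) (W : ℕ → I → I → Prop) (j : I) (s : ℕ) : ℕ :=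
  ((Finset.range s).filter (fun t => pout f W t = some j)).card

private lemma pout_eq {I : Type} (f : ℕ → I) (W : ℕ → I → I → Prop) (s : ℕ) :
    pout f W s = pstep f (W s) (Nat.unpair s).1 (fun j => pcount f W j s) := by
  classical
  rw [pout]
  congr 1
  funext j
  unfold pcount
  refine congrArg Finset.card (Finset.filter_congr fun t ht => ?_)
  rw [dif_pos (Finset.mem_range.mp ht)]

private lemma pcount_mono {I : Type} (f : ℕ → I) (W : ℕ → I → I → Prop) (j : I) {s t : ℕ}
    (h : s ≤ t) : pcount f W j s ≤ pcount f W j t := by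
  classical
  exact Finset.card_le_card (Finset.filter_subset_filter _ (Finset.range_subset_range.mpr h))

private lemma pout_congr {I : Type} (f : ℕ → I) (W W' : ℕ → I → I → Prop) :
    ∀ s, (∀ s' ≤ s, W s' = W' s') → pout f W s = pout f W' s := by
  classical
  intro s
  induction s using Nat.strong_induction_on with
  | _ s ih =>
    intro h
    rw [pout_eq, pout_eq, h s le_rfl]
    congr 1
    funext j
    unfold pcount
    refine congrArg Finset.card (Finset.filter_congr fun t ht => ?_)
    have htlt := Finset.mem_range.mp ht
    rw [ih t htlt (fun s' hs' => h s' (hs'.trans htlt.le))]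

private lemma pout_no_veto {I : Type} {f : ℕ → I} {W : ℕ → I → I → Prop} {s : ℕ} {j : I}
    (h : pout f W s = some j) :
    ∀ m' ≤ pcount f W j s, f m' ≠ j → ¬ W s (f m') j := by
  classical
  rw [pout_eq] at h
  unfold pstep at h
  by_cases hq : (plQ f (W s) (Nat.unpair s).1).Nonempty
  · rw [if_pos hq] at h
    by_cases hv : ∃ m' ≤ pcount f W (f (sInf (plQ f (W s) (Nat.unpair s).1))) s,
        f m' ≠ f (sInf (plQ f (W s) (Nat.unpair s).1)) ∧
        W s (f m') (f (sInf (plQ f (W s) (Nat.unpair s).1)))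
    · rw [if_pos hv] at h; cases h
    · rw [if_neg hv] at h
      have hj : f (sInf (plQ f (W s) (Nat.unpair s).1)) = j := Option.some.inj h
      intro m' hm' hne hW
      exact hv ⟨m', by rw [hj]; exact hm', by rw [hj]; exact hne, by rw [hj]; exact hW⟩
  · rw [if_neg hq] at h; cases h

private lemma pstep_eq_some {I : Type} (f : ℕ → I) (Ws : I → I → Prop) (n : ℕ) (c : I → ℕ)
    (mk : ℕ) (hmem : mk ∈ plQ f Ws n) (hmin : ∀ m < mk, m ∉ plQ f Ws n)
    (hnov : ∀ m' ≤ c (f mk), f m' ≠ f mk → ¬ Ws (f m') (f mk)) :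
    pstep f Ws n c = some (f mk) := by
  classical
  have hne : (plQ f Ws n).Nonempty := ⟨mk, hmem⟩
  have hInf : sInf (plQ f Ws n) = mk := by
    rcases lt_or_eq_of_le (Nat.sInf_le hmem) with h | h
    · exact absurd (Nat.sInf_mem hne) (hmin _ h)
    · exact h
  unfold pstep
  rw [if_pos hne, hInf, if_neg]
  rintro ⟨m', hm', hne', hW⟩
  exact hnov m' hm' hne' hW

/-- Each wrong index is output only finitely often. -/
private lemma pl_claim1 {I : Type} (f : ℕ → I) (W : ℕ → I → I → Prop) (j k : I) (hjk : j ≠ k)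
    (mk : ℕ) (hmk : f mk = k) (S : ℕ) (hS : ∀ s ≥ S, W s k j) :
    {s | pout f W s = some j}.Finite := by
  classical
  by_contra hfin
  have hinf : {s | pout f W s = some j}.Infinite := hfin
  obtain ⟨F, hFsub, hFcard⟩ := hinf.exists_subset_card_eq mk
  obtain ⟨s, hsmem, hslt⟩ := hinf.exists_gt (max (F.sup id) S)
  have hcnt : mk ≤ pcount f W j s := by
    rw [← hFcard]
    refine Finset.card_le_card fun u hu => ?_
    refine Finset.mem_filter.mpr ⟨Finset.mem_range.mpr ?_, hFsub hu⟩
    have : u ≤ F.sup id := Finset.le_sup (f := id) hu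
    omega
  have hnov := pout_no_veto hsmem mk hcnt (by rw [hmk]; exact hjk.symm)
  rw [hmk] at hnov
  exact hnov (hS s (by omega))

/-- The correct index is output infinitely often. -/
private lemma pl_claim2 {I : Type} (f : ℕ → I) (W : ℕ → I → I → Prop) (k : I)
    (mk : ℕ) (hmk : f mk = k) (hmin : ∀ m < mk, f m ≠ k)
    (Hwin : ∀ j, j ≠ k → ∃ S, ∀ s ≥ S, W s k j)
    (Hlose : ∀ j, j ≠ k → ∃ S, ∀ s ≥ S, ¬ W s j k) :
    {s | pout f W s = some k}.Infinite := by
  classical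
  by_contra hni
  rw [Set.not_infinite] at hni
  set C := hni.toFinset.card with hC
  have hCb : ∀ s, pcount f W k s ≤ C := by
    intro s
    refine Finset.card_le_card fun t ht => ?_
    exact hni.mem_toFinset.mpr (Finset.mem_filter.mp ht).2
  -- eventualities over finite sets of positions
  have hev : ∀ (F : Finset ℕ) (P : ℕ → ℕ → Prop), (∀ m ∈ F, ∃ S, ∀ s ≥ S, P m s) →
      ∃ S, ∀ s ≥ S, ∀ m ∈ F, P m s := by
    intro F
    induction F using Finset.induction_on with
    | empty => exact fun P _ => ⟨0, fun s _ m hm => absurd hm (Finset.notMem_empty m)⟩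
    | insert a s ha ih =>
      intro P h
      obtain ⟨Sa, hSa⟩ := h _ (Finset.mem_insert_self _ _)
      obtain ⟨S', hS'⟩ := ih P (fun m hm => h m (Finset.mem_insert_of_mem hm))
      refine ⟨max Sa S', fun s hs m hm => ?_⟩
      rcases Finset.mem_insert.mp hm with rfl | hm'
      · exact hSa s (le_trans (le_max_left _ _) hs)
      · exact hS' s (le_trans (le_max_right _ _) hs) m hm'
  obtain ⟨S1, hS1⟩ : ∃ S, ∀ s ≥ S, ∀ m ∈ Finset.range (mk+1), f m ≠ k → W s k (f m) := by
    refine hev _ _ fun m _ => ?_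
    by_cases hc : f m = k
    · exact ⟨0, fun s _ h' => absurd hc h'⟩
    · obtain ⟨S, hS⟩ := Hwin (f m) hc
      exact ⟨S, fun s hs _ => hS s hs⟩
  obtain ⟨S2, hS2⟩ : ∃ S, ∀ s ≥ S, ∀ m ∈ Finset.range (C+1), f m ≠ k → ¬ W s (f m) k := by
    refine hev _ _ fun m _ => ?_
    by_cases hc : f m = k
    · exact ⟨0, fun s _ h' => absurd hc h'⟩
    · obtain ⟨S, hS⟩ := Hlose (f m) hc
      exact ⟨S, fun s hs _ => hS s hs⟩
  obtain ⟨S3, hS3⟩ : ∃ S, ∀ s ≥ S, ∀ m ∈ Finset.range mk, ¬ W s (f m) k := by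
    refine hev _ _ fun m hm => Hlose (f m) (hmin m (Finset.mem_range.mp hm))
  obtain ⟨T, hT⟩ := hni.bddAbove
  set t₀ := max (max S1 (max S2 S3)) (T+1) with ht₀
  set s := Nat.pair mk t₀ with hs
  have hts : t₀ ≤ s := Nat.right_le_pair mk t₀
  have hS1s : S1 ≤ s := by omega
  have hS2s : S2 ≤ s := by omega
  have hS3s : S3 ≤ s := by omega
  have hout : pout f W s = some k := by
    rw [pout_eq, hs, Nat.unpair_pair]
    have := pstep_eq_some f (W s) mk (fun j => pcount f W j s) mk
      ⟨le_rfl, fun m' hm' hne => by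
        rw [hmk]
        rw [hmk] at hne
        exact hS1 s hS1s m' (Finset.mem_range.mpr (by omega)) hne⟩
      (fun m hm hmem' => by
        obtain ⟨_, hφ⟩ := hmem'
        have hwk := hφ mk le_rfl (by rw [hmk]; exact (hmin m hm).symm)
        rw [hmk] at hwk
        exact hS3 s hS3s m (Finset.mem_range.mpr hm) hwk)
      (fun m' hm' hne => by
        rw [hmk] at hm' hne ⊢
        have : m' ≤ C := le_trans hm' (hCb s)
        exact hS2 s hS2s m' (Finset.mem_range.mpr (by omega)) hne)
    rw [hmk] at this
    rw [← hs]
    exact this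
  have hle : s ≤ T := hT hout
  omega

end PLAux

/-- A countable family of pairwise nonisomorphic structures is PL-learnable iff every
two-element subfamily `{A i, A j}` (`i ≠ j`) is Ex-learnable. -/
theorem plLearnable_iff_pairs_exLearnable {I : Type} [Countable I] (A : I → Struc)
    (hA : ∀ i j, i ≠ j → ¬ Isom (A i) (A j)) :
    (∃ M : Struc → ℕ → Option I, IsLearner M ∧ PLLearns A M) ↔
      ∀ i j, i ≠ j →
        ∃ M : Struc → ℕ → Option (Fin 2), IsLearner M ∧
          ExLearns (fun t : Fin 2 => if t = 0 then A i else A j) M := by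
  constructor
  · -- PL-learnable → pairs Ex-learnable
    rintro ⟨M, hM, hPL⟩ i j hij
    refine ⟨pairLearner M i j, pairLearner_isLearner hM i j, ?_⟩
    intro R i' hR
    fin_cases i'
    · -- R ≅ A i
      have hRi : Isom R (A i) := by simpa using hR
      have hinf : {s | M R s = some i}.Infinite := (hPL R ⟨i, hRi⟩ i).mpr hRi
      have hfin : {s | M R s = some j}.Finite := by
        rw [← Set.not_infinite]
        intro hinf'
        exact hA i j hij (isomTrans (isomSymm hRi) ((hPL R ⟨i, hRi⟩ j).mp hinf'))
      simpa using pairLearner_conv₀ hinf hfin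
    · -- R ≅ A j
      have hRj : Isom R (A j) := by simpa using hR
      have hinf : {s | M R s = some j}.Infinite := (hPL R ⟨j, hRj⟩ j).mpr hRj
      have hfin : {s | M R s = some i}.Finite := by
        rw [← Set.not_infinite]
        intro hinf'
        exact hA i j hij
          (isomTrans (isomSymm ((hPL R ⟨j, hRj⟩ i).mp hinf')) hRj)
      simpa using pairLearner_conv₁ hij hinf hfin
  · -- pairs Ex-learnable → PL-learnable
    intro hp
    classical
    by_cases hI : Nonempty I
    · obtain ⟨f, hf⟩ := exists_surjective_nat I
      set N : I → I → Struc → ℕ → Option (Fin 2) := fun a b =>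
        if h : a ≠ b then Classical.choose (hp a b h) else fun _ _ => none with hNdef
      have hNL : ∀ a b, IsLearner (N a b) := by
        intro a b
        by_cases h : a ≠ b
        · simp only [hNdef]; rw [dif_pos h]; exact (Classical.choose_spec (hp a b h)).1
        · simp only [hNdef]; rw [dif_neg h]; exact fun _ _ _ _ => rfl
      have hNE : ∀ a b (h : a ≠ b),
          ExLearns (fun t : Fin 2 => if t = 0 then A a else A b) (N a b) := by
        intro a b h
        simp only [hNdef]; rw [dif_pos h]; exact (Classical.choose_spec (hp a b h)).2
      set W : Struc → ℕ → I → I → Prop := fun R s a b =>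
        N a b R s = some 0 ∧ N b a R s = some 1 with hWdef
      refine ⟨fun R s => pout f (W R) s, ?_, ?_⟩
      · intro R R' s hre
        refine pout_congr f (W R) (W R') s fun s' hs' => ?_
        funext a b
        have h1 : N a b R s' = N a b R' s' := hNL a b R R' s' (restrEq_mono hre hs')
        have h2 : N b a R s' = N b a R' s' := hNL b a R R' s' (restrEq_mono hre hs')
        simp only [hWdef, h1, h2]
      · rintro R ⟨k, hk⟩ i
        have Hwin : ∀ j, j ≠ k → ∃ S, ∀ s ≥ S, W R s k j := by
          intro j hjk
          obtain ⟨s1, hs1⟩ := hNE k j (Ne.symm hjk) R 0 (by simpa using hk)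
          obtain ⟨s2, hs2⟩ := hNE j k hjk R 1 (by simpa using hk)
          exact ⟨max s1 s2, fun s hs =>
            ⟨hs1 s (le_trans (le_max_left _ _) hs), hs2 s (le_trans (le_max_right _ _) hs)⟩⟩
        have Hlose : ∀ j, j ≠ k → ∃ S, ∀ s ≥ S, ¬ W R s j k := by
          intro j hjk
          obtain ⟨s2, hs2⟩ := hNE j k hjk R 1 (by simpa using hk)
          refine ⟨s2, fun s hs hw => ?_⟩
          have h1 := hs2 s hs
          rw [hw.1] at h1
          exact absurd (Option.some.inj h1) (by decide)
        have hex : ∃ m, f m = k := hf k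
        have hmk : f (Nat.find hex) = k := Nat.find_spec hex
        have hmin : ∀ m < Nat.find hex, f m ≠ k := fun m hm => Nat.find_min hex hm
        constructor
        · intro hinf
          by_contra hni
          have hik : i ≠ k := fun he => hni (he ▸ hk)
          obtain ⟨S, hS⟩ := Hwin i hik
          exact hinf (pl_claim1 f (W R) i k hik (Nat.find hex) hmk S hS)
        · intro hiso
          have hik : i = k := by
            by_contra hne
            exact hA i k hne (isomTrans (isomSymm hiso) hk)
          subst hik
          exact pl_claim2 f (W R) i (Nat.find hex) hmk hmin Hwin Hlose
    · exact ⟨fun _ _ => none, fun _ _ _ _ => rfl, fun R hR i => (hI ⟨i⟩).elim⟩
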